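/- Fix a real β > 0 and define g : ℝ → ℝ by g(s) = β · √(log₂ log₂ log₂ s) (for s large enough that this is defined). There exists a constant c > 0 and n₀ such that for all n ≥ n₀, iterating g starting from n for ⌊c · log* n⌋ steps yields a value that is still at least 2, where log* n denotes the least number of iterations of log₂ needed to bring n to at most 2. -/

import Mathlib

/-- `logStar n` is the least number of iterations of `log₂` needed to bring `n`
down to at most `2`. -/
def logStar : ℕ → ℕ
  | n =>
    if h : n ≤ 2 then 0
    else 1 + logStar (Nat.log 2 n)
decreasing_by exact Nat.log_lt_self 2 (by omega)

/-- Tower function: `tw 0 = 2`, `tw (k+1) = 2 ^ tw k`. -/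
def tw : ℕ → ℕ
  | 0 => 2
  | k + 1 => 2 ^ tw k

lemma tw_pos (k : ℕ) : 0 < tw k := by
  cases k with
  | zero => simp [tw]
  | succ k => exact pow_pos (by norm_num) _

lemma two_le_tw (k : ℕ) : 2 ≤ tw k := by
  induction k with
  | zero => simp [tw]
  | succ k ih =>
      show 2 ≤ 2 ^ tw k
      calc 2 = 2 ^ 1 := (pow_one 2).symm
      _ ≤ 2 ^ tw k := Nat.pow_le_pow_right (by norm_num) (by omega)

lemma tw_lt_tw_succ (k : ℕ) : tw k < tw (k + 1) := by
  show tw k < 2 ^ tw k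
  exact Nat.lt_two_pow_self

lemma tw_mono : Monotone tw :=
  monotone_nat_of_le_succ (fun k => (tw_lt_tw_succ k).le)

/-- If `n ≥ 2 ^ tw k` then `logStar n ≥ k + 1`. -/
lemma logStar_ge (k : ℕ) : ∀ n : ℕ, 2 ^ tw k ≤ n → k + 1 ≤ logStar n := by
  induction k with
  | zero =>
      intro n hn
      have h2 : ¬ n ≤ 2 := by
        have : (4 : ℕ) ≤ n := by simpa [tw] using hn
        omega
      rw [logStar, dif_neg h2]; omega
  | succ k ih =>
      intro n hn
      have h2 : ¬ n ≤ 2 := by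
        have h4 : 2 ^ 2 ≤ 2 ^ tw (k+1) := Nat.pow_le_pow_right (by norm_num) (two_le_tw _)
        omega
      have hlog : 2 ^ tw k ≤ Nat.log 2 n := by
        have : tw (k+1) ≤ Nat.log 2 n :=
          (Nat.le_log_iff_pow_le (by norm_num) (by omega)).mpr hn
        simpa [tw] using this
      have := ih _ hlog
      rw [logStar, dif_neg h2]; omega

/-- If `logStar n ≥ k + 1` then `n > tw k`. -/
lemma tw_lt_of_logStar : ∀ k n : ℕ, k + 1 ≤ logStar n → tw k < n := by
  intro k
  induction k with
  | zero =>
      intro n hn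
      by_contra h
      have : n ≤ 2 := by simpa [tw] using h
      rw [logStar, dif_pos this] at hn; omega
  | succ k ih =>
      intro n hn
      have h2 : ¬ n ≤ 2 := by
        intro h; rw [logStar, dif_pos h] at hn; omega
      rw [logStar, dif_neg h2] at hn
      have hl : tw k < Nat.log 2 n := ih _ (by omega)
      have : 2 ^ (tw k + 1) ≤ n := by
        calc 2 ^ (tw k + 1) ≤ 2 ^ Nat.log 2 n := Nat.pow_le_pow_right (by norm_num) hl
        _ ≤ n := Nat.pow_log_le_self 2 (by omega)
      calc tw (k+1) = 2 ^ tw k := rfl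
      _ < 2 ^ (tw k + 1) := Nat.pow_lt_pow_right (by norm_num) (by omega)
      _ ≤ n := this

lemma logb_two_pow (m : ℕ) : Real.logb 2 ((2:ℝ) ^ m) = m := by
  rw [Real.logb_pow, Real.logb_self_eq_one (by norm_num)]
  ring

lemma sqrt_two_pow (m : ℕ) : Real.sqrt ((2:ℝ) ^ m) = Real.sqrt 2 ^ m := by
  rw [show ((2:ℝ) ^ m) = (Real.sqrt 2 ^ m) ^ 2 by
        rw [← pow_mul, mul_comm, pow_mul, Real.sq_sqrt (by norm_num : (0:ℝ) ≤ 2)],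
      Real.sqrt_sq (pow_nonneg (Real.sqrt_nonneg 2) m)]

theorem stmt_10 (β : ℝ) (hβ : 0 < β) :
    ∃ c : ℝ, 0 < c ∧ ∃ n₀ : ℕ, ∀ n : ℕ, n₀ ≤ n →
      (2 : ℝ) ≤
        (fun s : ℝ => β * Real.sqrt (Real.logb 2 (Real.logb 2 (Real.logb 2 s))))^[
          ⌊c * (logStar n : ℝ)⌋₊] (n : ℝ) := by
  set g : ℝ → ℝ := fun s : ℝ => β * Real.sqrt (Real.logb 2 (Real.logb 2 (Real.logb 2 s)))
    with hg
  -- threshold: for t large, t ≤ β * (√2)^t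
  have hsqrt2 : (1:ℝ) < Real.sqrt 2 := by
    rw [show (1:ℝ) = Real.sqrt 1 by simp]
    exact Real.sqrt_lt_sqrt (by norm_num) (by norm_num)
  have hthresh : ∃ N : ℕ, ∀ t : ℕ, N ≤ t → (t : ℝ) ≤ β * Real.sqrt 2 ^ t := by
    have h0 := tendsto_pow_const_div_const_pow_of_one_lt 1 hsqrt2
    have h1 : ∀ᶠ t : ℕ in Filter.atTop, (t:ℝ) ^ 1 / Real.sqrt 2 ^ t < β :=
      h0.eventually (Filter.tendsto_id.eventually_lt_const hβ)
    rcases h1.exists_forall_of_atTop with ⟨N, hN⟩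
    refine ⟨N, fun t ht => ?_⟩
    have hpow : (0:ℝ) < Real.sqrt 2 ^ t := pow_pos (by positivity) _
    have := hN t ht
    rw [pow_one, div_lt_iff₀ hpow] at this
    linarith
  obtain ⟨N, hN⟩ := hthresh
  -- pick K with tw K ≥ N for all k ≥ K (tw is monotone, tw K ≥ K)
  have twK_ge : ∀ k : ℕ, k ≤ tw k := by
    intro k
    induction k with
    | zero => omega
    | succ k ih => have := tw_lt_tw_succ k; omega
  set K := N with hK
  have hKge : ∀ k, K ≤ k → (N : ℕ) ≤ tw k := fun k hk => le_trans (le_trans hk (twK_ge k)) (by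
    exact tw_mono le_rfl)
  -- single step: if s ≥ tw (k+4) and k ≥ K then g s ≥ tw k
  have step : ∀ k : ℕ, K ≤ k → ∀ s : ℝ, (tw (k+4) : ℝ) ≤ s → (tw k : ℝ) ≤ g s := by
    intro k hk s hs
    have cast : ∀ j : ℕ, ((tw (j+1) : ℕ) : ℝ) = (2:ℝ) ^ tw j := by
      intro j
      show ((2 ^ tw j : ℕ) : ℝ) = _
      push_cast; ring
    have hposc : ∀ j : ℕ, (0:ℝ) < ((tw j : ℕ) : ℝ) := fun j => by exact_mod_cast tw_pos j
    have l1 : ((tw (k+3) : ℕ) : ℝ) ≤ Real.logb 2 s := by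
      calc ((tw (k+3) : ℕ) : ℝ) = Real.logb 2 ((2:ℝ) ^ tw (k+3)) := (logb_two_pow _).symm
      _ = Real.logb 2 ((tw (k+4) : ℕ) : ℝ) := by rw [cast (k+3)]
      _ ≤ Real.logb 2 s := Real.logb_le_logb_of_le (by norm_num) (hposc _) hs
    have l2 : ((tw (k+2) : ℕ) : ℝ) ≤ Real.logb 2 (Real.logb 2 s) := by
      calc ((tw (k+2) : ℕ) : ℝ) = Real.logb 2 ((2:ℝ) ^ tw (k+2)) := (logb_two_pow _).symm
      _ = Real.logb 2 ((tw (k+3) : ℕ) : ℝ) := by rw [cast (k+2)]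
      _ ≤ _ := Real.logb_le_logb_of_le (by norm_num) (hposc _) l1
    have l3 : ((tw (k+1) : ℕ) : ℝ) ≤ Real.logb 2 (Real.logb 2 (Real.logb 2 s)) := by
      calc ((tw (k+1) : ℕ) : ℝ) = Real.logb 2 ((2:ℝ) ^ tw (k+1)) := (logb_two_pow _).symm
      _ = Real.logb 2 ((tw (k+2) : ℕ) : ℝ) := by rw [cast (k+1)]
      _ ≤ _ := Real.logb_le_logb_of_le (by norm_num) (hposc _) l2
    have l4 : Real.sqrt 2 ^ tw k ≤ Real.sqrt (Real.logb 2 (Real.logb 2 (Real.logb 2 s))) := by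
      calc Real.sqrt 2 ^ tw k = Real.sqrt ((2:ℝ) ^ tw k) := (sqrt_two_pow _).symm
      _ = Real.sqrt ((tw (k+1) : ℕ) : ℝ) := by rw [cast k]
      _ ≤ _ := Real.sqrt_le_sqrt l3
    have l5 : ((tw k : ℕ) : ℝ) ≤ β * Real.sqrt 2 ^ tw k :=
      hN (tw k) (hKge k hk)
    calc ((tw k : ℕ) : ℝ) ≤ β * Real.sqrt 2 ^ tw k := l5
    _ ≤ β * Real.sqrt (Real.logb 2 (Real.logb 2 (Real.logb 2 s))) :=
        mul_le_mul_of_nonneg_left l4 hβ.le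
  -- iterate
  have iter : ∀ j k : ℕ, K ≤ k → ∀ s : ℝ, (tw (k + 4*j) : ℝ) ≤ s → (tw k : ℝ) ≤ g^[j] s := by
    intro j
    induction j with
    | zero => intro k _ s hs; simpa using hs
    | succ j ih =>
        intro k hk s hs
        rw [Function.iterate_succ_apply]
        apply ih k hk
        have h' : (tw ((k + 4*j) + 4) : ℝ) ≤ s := by
          have e : k + 4*j + 4 = k + 4*(j+1) := by ring
          rw [e]; exact hs
        exact step (k + 4*j) (by omega) s h'
  refine ⟨1/5, by norm_num, 2 ^ tw (5*K + 4), fun n hn => ?_⟩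
  set L := logStar n with hL
  have hL5 : 5*K + 5 ≤ L := logStar_ge (5*K+4) n hn
  set m := ⌊(1/5 : ℝ) * (L : ℝ)⌋₊ with hm
  have hm5 : 5 * m ≤ L := by
    have h1 : (m : ℝ) ≤ (1/5 : ℝ) * L := Nat.floor_le (by positivity)
    have : (5 * m : ℝ) ≤ L := by linarith
    exact_mod_cast this
  have hKm : K + 4*m + 1 ≤ L := by omega
  have hntw : (tw (K + 4*m) : ℝ) ≤ (n : ℝ) := by
    have := tw_lt_of_logStar (K + 4*m) n hKm
    exact_mod_cast this.le
  have := iter m K le_rfl (n : ℝ) hntw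
  calc (2:ℝ) ≤ (tw K : ℝ) := by exact_mod_cast two_le_tw K
  _ ≤ g^[m] (n : ℝ) := this
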